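/- arXiv:2206.09147 — 2 statements merged into one kernel-verified Lean document; each statement's English description precedes it below -/
import Mathlib

section
/- Let 0 < τ₂ < τ₁ be reals, let x be a real number, let k ≥ 1 and let r₁, …, r_k be natural numbers with r_j ≥ 1 for every j. Set s_k = r₁ + ⋯ + r_k and m_j = r_j + r_{j+1} + ⋯ + r_k (so m_{k+1} = 0). Then the deformed multinomial coefficients satisfy the recurrence M(x; r₁,…,r_k) = τ₁^{s_k} · M(x−1; r₁,…,r_k) + Σ_{j=1}^{k} τ₁^{m_{j+1}} · τ₂^{x−m_j} · M(x−1; r₁,…,r_{j−1}, r_j−1, r_{j+1},…,r_k), where τ₂^{x−m_j} and τ₁^{m_{j+1}} are real powers. (This is the first recurrence of the paper's Proposition on multinomial coefficients, with the factor τ₁^{m_{j+1}} included so that the identity holds for all k.) -/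
open Finset

noncomputable def dnum (τ₁ τ₂ x : ℝ) : ℝ := (τ₁ ^ x - τ₂ ^ x) / (τ₁ - τ₂)

noncomputable def dfac (τ₁ τ₂ : ℝ) (r : ℕ) : ℝ :=
  ∏ j ∈ Finset.range r, dnum τ₁ τ₂ ((j : ℝ) + 1)

noncomputable def dfall (τ₁ τ₂ x : ℝ) (r : ℕ) : ℝ :=
  ∏ i ∈ Finset.range r, dnum τ₁ τ₂ (x - (i : ℝ))

noncomputable def dbinom (τ₁ τ₂ x : ℝ) (r : ℕ) : ℝ := dfall τ₁ τ₂ x r / dfac τ₁ τ₂ r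

noncomputable def dmulti (τ₁ τ₂ x : ℝ) {k : ℕ} (r : Fin k → ℕ) : ℝ :=
  dfall τ₁ τ₂ x (∑ j, r j) / ∏ j, dfac τ₁ τ₂ (r j)

lemma dnum_pos {τ₁ τ₂ : ℝ} (hτ₂ : 0 < τ₂) (hττ : τ₂ < τ₁) {y : ℝ} (hy : 0 < y) :
    0 < dnum τ₁ τ₂ y := by
  have h1 : τ₂ ^ y < τ₁ ^ y := Real.rpow_lt_rpow hτ₂.le hττ hy
  exact div_pos (sub_pos.2 h1) (sub_pos.2 hττ)

lemma dfac_pos {τ₁ τ₂ : ℝ} (hτ₂ : 0 < τ₂) (hττ : τ₂ < τ₁) (r : ℕ) :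
    0 < dfac τ₁ τ₂ r :=
  Finset.prod_pos fun j _ => dnum_pos hτ₂ hττ (by positivity)

lemma dfac_succ (τ₁ τ₂ : ℝ) (n : ℕ) :
    dfac τ₁ τ₂ (n + 1) = dfac τ₁ τ₂ n * dnum τ₁ τ₂ ((n : ℝ) + 1) :=
  Finset.prod_range_succ _ _

lemma dfall_succ (τ₁ τ₂ x : ℝ) (n : ℕ) :
    dfall τ₁ τ₂ x (n + 1) = dfall τ₁ τ₂ x n * dnum τ₁ τ₂ (x - (n : ℝ)) :=
  Finset.prod_range_succ _ _

lemma dfall_succ_left (τ₁ τ₂ x : ℝ) (n : ℕ) :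
    dfall τ₁ τ₂ x (n + 1) = dfall τ₁ τ₂ (x - 1) n * dnum τ₁ τ₂ x := by
  rw [dfall, Finset.prod_range_succ']
  simp only [Nat.cast_zero, sub_zero]
  congr 1
  apply Finset.prod_congr rfl
  intro i _
  congr 1
  push_cast
  ring

lemma scalar_rec (τ₁ τ₂ : ℝ) (hτ₂ : 0 < τ₂) (hττ : τ₂ < τ₁) (x : ℝ)
    (k : ℕ) (r : Fin k → ℕ) :
    dnum τ₁ τ₂ x =
      τ₁ ^ (((∑ j, r j : ℕ) : ℝ)) * dnum τ₁ τ₂ (x - ((∑ j, r j : ℕ) : ℝ)) +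
      ∑ j : Fin k,
        τ₁ ^ (((∑ i ∈ Finset.Ioi j, r i : ℕ) : ℝ)) *
          τ₂ ^ (x - ((∑ i ∈ Finset.Ici j, r i : ℕ) : ℝ)) *
          dnum τ₁ τ₂ ((r j : ℝ)) := by
  classical
  have h1 : 0 < τ₁ := hτ₂.trans hττ
  have hne : τ₁ - τ₂ ≠ 0 := sub_ne_zero.2 (ne_of_gt hττ)
  set m : ℕ → ℕ := fun t => ∑ i ∈ univ.filter (fun i : Fin k => t ≤ (i : ℕ)), r i with hm
  set F : ℕ → ℝ := fun t => τ₁ ^ ((t : ℕ) : ℝ) * τ₂ ^ (x - ((t : ℕ) : ℝ)) with hF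
  have hm0 : m 0 = ∑ j, r j := by simp [hm]
  have hmk : m k = 0 := by
    rw [hm]
    apply Finset.sum_eq_zero
    intro i hi
    simp only [mem_filter] at hi
    exact absurd hi.2 (not_le.2 i.isLt)
  have hIci : ∀ j : Fin k, (∑ i ∈ Ici j, r i) = m (j : ℕ) := by
    intro j
    simp only [hm]
    apply Finset.sum_congr _ (fun _ _ => rfl)
    ext i
    simp only [mem_Ici, mem_filter, mem_univ, true_and, Fin.le_def]
  have hIoi : ∀ j : Fin k, (∑ i ∈ Ioi j, r i) = m ((j : ℕ) + 1) := by
    intro j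
    simp only [hm]
    apply Finset.sum_congr _ (fun _ _ => rfl)
    ext i
    simp only [mem_Ioi, mem_filter, mem_univ, true_and, Fin.lt_def]
    omega
  have hstep : ∀ j : Fin k, m (j : ℕ) = r j + m ((j : ℕ) + 1) := by
    intro j
    have hj : (univ.filter (fun i : Fin k => (j : ℕ) ≤ (i : ℕ))) =
        insert j (univ.filter (fun i : Fin k => (j : ℕ) + 1 ≤ (i : ℕ))) := by
      ext i
      simp only [mem_filter, mem_insert, mem_univ, true_and]
      constructor
      · intro h
        rcases eq_or_lt_of_le h with h' | h'
        · left; exact (Fin.ext h'.symm)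
        · right; omega
      · rintro (rfl | h) <;> omega
    simp only [hm]
    rw [hj, Finset.sum_insert (by simp)]
  have hterm : ∀ j : Fin k,
      τ₁ ^ (((∑ i ∈ Finset.Ioi j, r i : ℕ) : ℝ)) *
        τ₂ ^ (x - ((∑ i ∈ Finset.Ici j, r i : ℕ) : ℝ)) * dnum τ₁ τ₂ ((r j : ℝ)) =
      (F (m (j : ℕ)) - F (m ((j : ℕ) + 1))) / (τ₁ - τ₂) := by
    intro j
    rw [hIci j, hIoi j, hF, dnum]
    simp only []
    set a : ℝ := ((m ((j : ℕ) + 1) : ℕ) : ℝ) with ha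
    set b : ℝ := ((m (j : ℕ) : ℕ) : ℝ) with hbdef
    have hb : b = a + (r j : ℝ) := by
      rw [ha, hbdef, hstep j]; push_cast; ring
    have e1 : τ₁ ^ a * τ₁ ^ ((r j : ℕ) : ℝ) = τ₁ ^ b := by
      rw [← Real.rpow_add h1]; congr 1; rw [hb]
    have e2 : τ₂ ^ (x - b) * τ₂ ^ ((r j : ℕ) : ℝ) = τ₂ ^ (x - a) := by
      rw [← Real.rpow_add hτ₂]; congr 1; rw [hb]; ring
    linear_combination (τ₂ ^ (x - b) * e1 - τ₁ ^ a * e2) / (τ₁ - τ₂)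
  rw [Finset.sum_congr rfl (fun j _ => hterm j)]
  have htel : ∑ j : Fin k, (F (m (j : ℕ)) - F (m ((j : ℕ) + 1))) / (τ₁ - τ₂)
      = (F (m 0) - F (m k)) / (τ₁ - τ₂) := by
    rw [← Finset.sum_div]
    congr 1
    rw [Fin.sum_univ_eq_sum_range (fun t => F (m t) - F (m (t + 1)))]
    exact Finset.sum_range_sub' (fun t => F (m t)) k
  rw [htel, hmk, hm0, hF, dnum, dnum]
  simp only [Nat.cast_zero, Real.rpow_zero, one_mul, sub_zero]
  set s : ℝ := ((∑ j, r j : ℕ) : ℝ)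
  have e1 : τ₁ ^ s * τ₁ ^ (x - s) = τ₁ ^ x := by
    rw [← Real.rpow_add h1]; congr 1; ring
  linear_combination -e1 / (τ₁ - τ₂)


/-- First recurrence for the deformed multinomial coefficients:
`M(x; r₁,…,r_k) = τ₁^{s_k} M(x−1; r₁,…,r_k)
  + Σ_j τ₁^{m_{j+1}} τ₂^{x−m_j} M(x−1; …, r_j−1, …)`,
where `s_k = r₁+⋯+r_k` and `m_j = r_j+⋯+r_k`. -/
theorem deformed_multinomial_recurrence_first
    (τ₁ τ₂ : ℝ) (hτ₂ : 0 < τ₂) (hττ : τ₂ < τ₁) (x : ℝ)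
    (k : ℕ) (hk : 1 ≤ k) (r : Fin k → ℕ) (hr : ∀ j, 1 ≤ r j) :
    dmulti τ₁ τ₂ x r =
      τ₁ ^ (((∑ j, r j : ℕ) : ℝ)) * dmulti τ₁ τ₂ (x - 1) r +
        ∑ j : Fin k,
          τ₁ ^ (((∑ i ∈ Finset.Ioi j, r i : ℕ) : ℝ)) *
            τ₂ ^ (x - ((∑ i ∈ Finset.Ici j, r i : ℕ) : ℝ)) *
            dmulti τ₁ τ₂ (x - 1) (Function.update r j (r j - 1)) := by
  classical
  have h1 : 0 < τ₁ := hτ₂.trans hττ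
  set s := ∑ j, r j with hs
  have hs1 : 1 ≤ s :=
    le_trans (hr ⟨0, hk⟩)
      (Finset.single_le_sum (f := r) (fun i _ => Nat.zero_le _) (mem_univ (⟨0, hk⟩ : Fin k)))
  obtain ⟨n, hn⟩ : ∃ n, s = n + 1 := ⟨s - 1, by omega⟩
  set D := ∏ j, dfac τ₁ τ₂ (r j) with hD
  have hDpos : 0 < D := Finset.prod_pos fun j _ => dfac_pos hτ₂ hττ _
  set B := dfall τ₁ τ₂ (x - 1) n with hB
  have hL : dmulti τ₁ τ₂ x r = B * dnum τ₁ τ₂ x / D := by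
    rw [dmulti, ← hs, ← hD, hn, dfall_succ_left, hB]
  have hR1 : dmulti τ₁ τ₂ (x - 1) r = B * dnum τ₁ τ₂ (x - (s : ℝ)) / D := by
    rw [dmulti, ← hs, ← hD, hn, dfall_succ, hB]
    congr 2
    push_cast [hn]
    ring
  have hupd : ∀ j : Fin k, dmulti τ₁ τ₂ (x - 1) (Function.update r j (r j - 1)) =
      dnum τ₁ τ₂ ((r j : ℝ)) * B / D := by
    intro j
    have hsum : ∑ i, Function.update r j (r j - 1) i = n := by
      rw [Finset.sum_update_of_mem (mem_univ j)]
      have := Finset.sum_eq_sum_sdiff_singleton_add (mem_univ j) r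
      have hrj := hr j
      omega
    have hprod : ∏ i, dfac τ₁ τ₂ (Function.update r j (r j - 1) i) =
        dfac τ₁ τ₂ (r j - 1) * ∏ i ∈ univ \ {j}, dfac τ₁ τ₂ (r i) := by
      rw [Finset.prod_eq_prod_diff_singleton_mul (mem_univ j), Function.update_self,
        Finset.prod_congr rfl (fun i hi => by
          rw [Function.update_of_ne (by simpa using (Finset.mem_sdiff.1 hi).2)])]
      ring
    have hDsplit : D = dfac τ₁ τ₂ (r j - 1) * dnum τ₁ τ₂ ((r j : ℝ)) *
        ∏ i ∈ univ \ {j}, dfac τ₁ τ₂ (r i) := by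
      have hrj : r j = (r j - 1) + 1 := by have := hr j; omega
      have hc : ((r j - 1 : ℕ) : ℝ) + 1 = ((r j : ℕ) : ℝ) := by
        have := hr j; push_cast [Nat.cast_sub this]; ring
      have hdfac : dfac τ₁ τ₂ (r j) =
          dfac τ₁ τ₂ (r j - 1) * dnum τ₁ τ₂ ((r j : ℕ) : ℝ) := by
        conv_lhs => rw [hrj]
        rw [dfac_succ, hc]
      rw [hD, Finset.prod_eq_prod_diff_singleton_mul (mem_univ j) (fun i => dfac τ₁ τ₂ (r i)),
        hdfac]
      ring
    have hrest : (0 : ℝ) < ∏ i ∈ univ \ {j}, dfac τ₁ τ₂ (r i) :=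
      Finset.prod_pos fun i _ => dfac_pos hτ₂ hττ _
    have hfacpos := dfac_pos hτ₂ hττ (r j - 1)
    have hnum : 0 < dnum τ₁ τ₂ ((r j : ℝ)) := by
      apply dnum_pos hτ₂ hττ
      have := hr j
      positivity
    rw [dmulti, hsum, hprod, ← hB, hDsplit]
    field_simp
  rw [hL, hR1, Finset.sum_congr rfl (fun j _ => by rw [hupd j])]
  have key := scalar_rec τ₁ τ₂ hτ₂ hττ x k r
  rw [← hs] at key
  rw [key, mul_add, add_div, Finset.mul_sum, Finset.sum_div]
  congr 1
  · ring
  · exact Finset.sum_congr rfl fun j _ => by ring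
end

section
/- Multivariate deformed Cauchy formula, second form: let 0 < τ₂ < τ₁ be reals, let n, k be naturals with k ≥ 1, and let x₁, …, x_{k+1} be real numbers. Then C(x₁ + ⋯ + x_{k+1}, n) = Σ τ₁^{Σ_{j=1}^{k} (n − s_j)(x_j − r_j)} · τ₂^{Σ_{j=1}^{k} r_j(z_j − (n − s_j))} · ∏_{j=1}^{k+1} C(x_j, r_j), where the sum runs over all tuples (r₁,…,r_k) of naturals with r₁ + ⋯ + r_k ≤ n, and where s_j = r₁ + ⋯ + r_j, r_{k+1} = n − s_k, and z_j = x_{j+1} + ⋯ + x_{k+1}. -/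
open Finset

/-- weight -/
noncomputable def Wt (τ₁ τ₂ x y : ℝ) (n r : ℕ) : ℝ :=
  τ₁ ^ (((n:ℝ) - (r:ℝ)) * (x - (r:ℝ))) * τ₂ ^ ((r:ℝ) * (y - ((n:ℝ) - (r:ℝ))))

noncomputable def Ut (τ₁ τ₂ x y : ℝ) (N r : ℕ) : ℝ :=
  Wt τ₁ τ₂ x y N r * τ₂ ^ (r:ℝ) * dnum τ₁ τ₂ ((N:ℝ) - (r:ℝ)) / dnum τ₁ τ₂ (N:ℝ) *
    (dbinom τ₁ τ₂ x r * dbinom τ₁ τ₂ y (N - r))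

noncomputable def Vt (τ₁ τ₂ x y : ℝ) (N r : ℕ) : ℝ :=
  Wt τ₁ τ₂ x y N r * τ₁ ^ ((N:ℝ) - (r:ℝ)) * dnum τ₁ τ₂ (r:ℝ) / dnum τ₁ τ₂ (N:ℝ) *
    (dbinom τ₁ τ₂ x r * dbinom τ₁ τ₂ y (N - r))

section basics
variable {τ₁ τ₂ : ℝ} (hτ₂ : 0 < τ₂) (hττ : τ₂ < τ₁)
include hτ₂ hττ

lemma dnum_pos_s10 {x : ℝ} (hx : 0 < x) : 0 < dnum τ₁ τ₂ x := by
  have h1 : (0:ℝ) < τ₁ := hτ₂.trans hττ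
  have : τ₂ ^ x < τ₁ ^ x := Real.rpow_lt_rpow hτ₂.le hττ hx
  exact div_pos (by linarith) (by linarith)

omit hτ₂ hττ in
lemma dnum_zero : dnum τ₁ τ₂ 0 = 0 := by simp [dnum]

lemma pascal (a b : ℝ) : dnum τ₁ τ₂ (a + b) = τ₁ ^ b * dnum τ₁ τ₂ a + τ₂ ^ a * dnum τ₁ τ₂ b := by
  have h1 : (0:ℝ) < τ₁ := hτ₂.trans hττ
  have hne : τ₁ - τ₂ ≠ 0 := by linarith
  unfold dnum
  rw [Real.rpow_add h1, Real.rpow_add hτ₂]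
  field_simp
  ring

omit hτ₂ hττ in
lemma dbinom_succ (x : ℝ) (m : ℕ) :
    dbinom τ₁ τ₂ x (m + 1) = dbinom τ₁ τ₂ x m * dnum τ₁ τ₂ (x - m) / dnum τ₁ τ₂ ((m:ℝ) + 1) := by
  unfold dbinom dfall dfac
  rw [Finset.prod_range_succ, Finset.prod_range_succ]
  field_simp

lemma dbinom_mul_dnum (x : ℝ) (m : ℕ) :
    dbinom τ₁ τ₂ x m * dnum τ₁ τ₂ (x - m) =
      dbinom τ₁ τ₂ x (m + 1) * dnum τ₁ τ₂ ((m : ℝ) + 1) := by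
  have h := dnum_pos_s10 hτ₂ hττ (x := (m:ℝ)+1) (by positivity)
  rw [dbinom_succ]
  field_simp

omit hτ₂ hττ in
lemma rpow_comb (h₁ : 0 < τ₁) (h₂ : 0 < τ₂) {a b c d a' b' : ℝ}
    (ha : a + c = a') (hb : b + d = b') :
    τ₁ ^ a * τ₂ ^ b * (τ₁ ^ c * τ₂ ^ d) = τ₁ ^ a' * τ₂ ^ b' := by
  rw [← ha, ← hb, Real.rpow_add h₁, Real.rpow_add h₂]; ring

lemma Wt_mul₁ (x y : ℝ) (n r : ℕ) :
    Wt τ₁ τ₂ x y n r * τ₂ ^ (y - ((n:ℝ) - (r:ℝ))) =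
      Wt τ₁ τ₂ x y (n+1) (r+1) * τ₁ ^ ((n:ℝ) - (r:ℝ)) := by
  have h₁ : (0:ℝ) < τ₁ := hτ₂.trans hττ
  have e1 : Wt τ₁ τ₂ x y n r * (τ₁ ^ (0:ℝ) * τ₂ ^ (y - ((n:ℝ) - (r:ℝ)))) =
      τ₁ ^ (((n:ℝ) - r) * (x - r)) * τ₂ ^ (((r:ℝ)+1) * (y - (n:ℝ) + r)) :=
    rpow_comb h₁ hτ₂ (by ring) (by ring)
  have e2 : Wt τ₁ τ₂ x y (n+1) (r+1) * (τ₁ ^ ((n:ℝ) - (r:ℝ)) * τ₂ ^ (0:ℝ)) =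
      τ₁ ^ (((n:ℝ) - r) * (x - r)) * τ₂ ^ (((r:ℝ)+1) * (y - (n:ℝ) + r)) :=
    rpow_comb h₁ hτ₂ (by push_cast; ring) (by push_cast; ring)
  have := e1.trans e2.symm
  rw [Real.rpow_zero, one_mul] at this
  rw [Real.rpow_zero, mul_one] at this
  exact this

lemma Wt_mul₂ (x y : ℝ) (n r : ℕ) :
    Wt τ₁ τ₂ x y n r * τ₁ ^ (x - (r:ℝ)) =
      Wt τ₁ τ₂ x y (n+1) r * τ₂ ^ (r:ℝ) := by
  have h₁ : (0:ℝ) < τ₁ := hτ₂.trans hττ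
  have e1 : Wt τ₁ τ₂ x y n r * (τ₁ ^ (x - (r:ℝ)) * τ₂ ^ (0:ℝ)) =
      τ₁ ^ (((n:ℝ) + 1 - r) * (x - r)) * τ₂ ^ ((r:ℝ) * (y - (n:ℝ) + r)) :=
    rpow_comb h₁ hτ₂ (by ring) (by ring)
  have e2 : Wt τ₁ τ₂ x y (n+1) r * (τ₁ ^ (0:ℝ) * τ₂ ^ (r:ℝ)) =
      τ₁ ^ (((n:ℝ) + 1 - r) * (x - r)) * τ₂ ^ ((r:ℝ) * (y - (n:ℝ) + r)) :=
    rpow_comb h₁ hτ₂ (by push_cast; ring) (by push_cast; ring)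
  have := e1.trans e2.symm
  rw [Real.rpow_zero, mul_one] at this
  rw [Real.rpow_zero, one_mul] at this
  exact this

lemma cauchy2 (n : ℕ) : ∀ x y : ℝ, dbinom τ₁ τ₂ (x + y) n =
    ∑ r ∈ Finset.range (n+1),
      Wt τ₁ τ₂ x y n r * (dbinom τ₁ τ₂ x r * dbinom τ₁ τ₂ y (n - r)) := by
  induction n with
  | zero =>
    intro x y
    simp [Wt, dbinom, dfall, dfac]
  | succ n ih =>
    intro x y
    have h₁ : (0:ℝ) < τ₁ := hτ₂.trans hττ
    have hD : 0 < dnum τ₁ τ₂ ((n:ℝ) + 1) := dnum_pos_s10 hτ₂ hττ (by positivity)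
    -- split of each new-level term
    have hsplit : ∀ r, Wt τ₁ τ₂ x y (n+1) r * (dbinom τ₁ τ₂ x r * dbinom τ₁ τ₂ y (n+1-r)) =
        Ut τ₁ τ₂ x y (n+1) r + Vt τ₁ τ₂ x y (n+1) r := by
      intro r
      have hp := pascal hτ₂ hττ (r:ℝ) ((n:ℝ) + 1 - (r:ℝ))
      rw [show (r:ℝ) + ((n:ℝ) + 1 - (r:ℝ)) = (n:ℝ) + 1 by ring] at hp
      simp only [Ut, Vt]
      push_cast
      rw [div_mul_eq_mul_div, div_mul_eq_mul_div, ← add_div, eq_div_iff hD.ne']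
      linear_combination (Wt τ₁ τ₂ x y (n+1) r *
        (dbinom τ₁ τ₂ x r * dbinom τ₁ τ₂ y (n+1-r))) * hp
    -- pointwise transformation of old-level terms
    have key : ∀ r ∈ Finset.range (n+1),
        Wt τ₁ τ₂ x y n r * (dbinom τ₁ τ₂ x r * dbinom τ₁ τ₂ y (n - r)) *
          (dnum τ₁ τ₂ (x + y - (n:ℝ)) / dnum τ₁ τ₂ ((n:ℝ) + 1)) =
        Ut τ₁ τ₂ x y (n+1) r + Vt τ₁ τ₂ x y (n+1) (r+1) := by
      intro r hr
      have hr' : r ≤ n := by simpa [Nat.lt_succ_iff] using hr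
      have hp := pascal hτ₂ hττ (y - ((n:ℝ) - (r:ℝ))) (x - (r:ℝ))
      rw [show (y - ((n:ℝ) - (r:ℝ))) + (x - (r:ℝ)) = x + y - (n:ℝ) by ring] at hp
      have hA := dbinom_mul_dnum hτ₂ hττ y (n - r)
      rw [Nat.cast_sub hr'] at hA
      have hB := dbinom_mul_dnum hτ₂ hττ x r
      have h1 := Wt_mul₁ hτ₂ hττ x y n r
      have h2 := Wt_mul₂ hτ₂ hττ x y n r
      have m1 := congrArg₂ (· * ·) h2 hA
      have m2 := congrArg₂ (· * ·) h1 hB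
      simp only [Ut, Vt, Nat.succ_sub_succ, Nat.succ_sub hr']
      rw [hp]
      push_cast
      simp only [Nat.succ_eq_add_one]
      rw [show ((n:ℝ)+1-(r:ℝ)) = (n:ℝ)-(r:ℝ)+1 by ring,
        show ((n:ℝ)+1-((r:ℝ)+1)) = (n:ℝ)-(r:ℝ) by ring]
      linear_combination
        (dbinom τ₁ τ₂ x r / dnum τ₁ τ₂ ((n:ℝ)+1)) * m1 +
        (dbinom τ₁ τ₂ y (n-r) / dnum τ₁ τ₂ ((n:ℝ)+1)) * m2
    have hU : Ut τ₁ τ₂ x y (n+1) (n+1) = 0 := by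
      have h0 : ((n+1:ℕ):ℝ) - ((n+1:ℕ):ℝ) = 0 := by ring
      simp only [Ut, h0, dnum_zero]
      ring
    have hV : Vt τ₁ τ₂ x y (n+1) 0 = 0 := by
      simp only [Vt, Nat.cast_zero, dnum_zero]
      ring
    calc dbinom τ₁ τ₂ (x + y) (n + 1)
        = (∑ r ∈ Finset.range (n+1),
              Wt τ₁ τ₂ x y n r * (dbinom τ₁ τ₂ x r * dbinom τ₁ τ₂ y (n - r))) *
            (dnum τ₁ τ₂ (x + y - (n:ℝ)) / dnum τ₁ τ₂ ((n:ℝ)+1)) := by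
          rw [dbinom_succ (x+y) n, ih x y, mul_div_assoc]
      _ = ∑ r ∈ Finset.range (n+1), (Ut τ₁ τ₂ x y (n+1) r + Vt τ₁ τ₂ x y (n+1) (r+1)) := by
          rw [Finset.sum_mul]; exact Finset.sum_congr rfl key
      _ = (∑ r ∈ Finset.range (n+1), Ut τ₁ τ₂ x y (n+1) r) +
            ∑ r ∈ Finset.range (n+1), Vt τ₁ τ₂ x y (n+1) (r+1) := Finset.sum_add_distrib
      _ = (∑ r ∈ Finset.range (n+1+1), Ut τ₁ τ₂ x y (n+1) r) +
            ∑ r ∈ Finset.range (n+1+1), Vt τ₁ τ₂ x y (n+1) r := by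
          rw [Finset.sum_range_succ (fun r => Ut τ₁ τ₂ x y (n+1) r) (n+1),
            Finset.sum_range_succ' (fun r => Vt τ₁ τ₂ x y (n+1) r) (n+1)]
          simp only [hU, hV, add_zero]
      _ = ∑ r ∈ Finset.range (n+1+1),
            Wt τ₁ τ₂ x y (n+1) r * (dbinom τ₁ τ₂ x r * dbinom τ₁ τ₂ y (n+1-r)) := by
          rw [← Finset.sum_add_distrib]
          exact Finset.sum_congr rfl fun r _ => (hsplit r).symm
end basics


lemma sum_Iic_zero {k : ℕ} (f : Fin (k+1) → ℕ) : ∑ i ∈ Iic (0 : Fin (k+1)), f i = f 0 := by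
  have h : (Iic (0 : Fin (k+1))) = {0} := by ext i; simp [Fin.le_zero_iff]
  rw [h, Finset.sum_singleton]

lemma sum_Iic_cons {k : ℕ} (a : ℕ) (s : Fin k → ℕ) (j : Fin k) :
    ∑ i ∈ Iic j.succ, (Fin.cons a s : Fin (k+1) → ℕ) i = a + ∑ i ∈ Iic j, s i := by
  rw [show (Iic j.succ) = univ.filter (· ≤ j.succ) by ext i; simp,
      show (Iic j) = univ.filter (· ≤ j) by ext i; simp,
      Finset.sum_filter, Finset.sum_filter, Fin.sum_univ_succ]
  simp [Fin.succ_le_succ_iff, Fin.zero_le, Fin.cons_succ]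

lemma zsum_zero {k : ℕ} (x : Fin (k+2) → ℝ) :
    ∑ i ∈ univ.filter (fun i : Fin (k+2) => ((0 : Fin (k+1)) : ℕ) < (i : ℕ)), x i
      = ∑ i : Fin (k+1), x i.succ := by
  rw [Finset.sum_filter, Fin.sum_univ_succ]
  simp

lemma zsum_succ {k : ℕ} (x : Fin (k+2) → ℝ) (j : Fin k) :
    ∑ i ∈ univ.filter (fun i : Fin (k+2) => ((j.succ : Fin (k+1)) : ℕ) < (i : ℕ)), x i
      = ∑ i ∈ univ.filter (fun i : Fin (k+1) => (j : ℕ) < (i : ℕ)), x i.succ := by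
  rw [Finset.sum_filter, Finset.sum_filter, Fin.sum_univ_succ]
  simp [Fin.val_succ, Nat.succ_lt_succ_iff]

lemma sum_filter_piFinset_succ {M : Type*} [AddCommMonoid M] (k n : ℕ)
    (F : (Fin (k+1) → ℕ) → M) :
    ∑ r ∈ (Fintype.piFinset fun _ : Fin (k+1) => Finset.range (n+1)).filter
        (fun r => ∑ j, r j ≤ n), F r
      = ∑ a ∈ Finset.range (n+1),
          ∑ s ∈ (Fintype.piFinset fun _ : Fin k => Finset.range (n - a + 1)).filter
            (fun s => ∑ j, s j ≤ n - a), F (Fin.cons a s) := by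
  rw [Finset.sum_sigma']
  apply Finset.sum_nbij' (i := fun r => (⟨r 0, Fin.tail r⟩ :
      Σ _a : ℕ, (Fin k → ℕ))) (j := fun p => Fin.cons p.1 p.2)
  · intro r hr
    simp only [Finset.mem_filter, Fintype.mem_piFinset, Finset.mem_range] at hr
    obtain ⟨h1, h2⟩ := hr
    rw [Fin.sum_univ_succ] at h2
    simp only [Finset.mem_sigma, Finset.mem_range, Finset.mem_filter, Fintype.mem_piFinset]
    have hts : ∑ i : Fin k, Fin.tail r i = ∑ i : Fin k, r i.succ := rfl
    refine ⟨h1 0, fun j => ?_, ?_⟩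
    · have hj : Fin.tail r j ≤ ∑ i : Fin k, Fin.tail r i :=
        Finset.single_le_sum (fun i _ => Nat.zero_le _) (Finset.mem_univ j)
      have h0 := h1 0
      omega
    · omega
  · intro p hp
    simp only [Finset.mem_sigma, Finset.mem_range, Finset.mem_filter,
      Fintype.mem_piFinset] at hp
    obtain ⟨h1, h2, h3⟩ := hp
    simp only [Finset.mem_filter, Fintype.mem_piFinset, Finset.mem_range]
    constructor
    · intro i
      refine Fin.cases ?_ ?_ i
      · simpa [Fin.cons_zero] using h1
      · intro j
        have := h2 j
        simp only [Fin.cons_succ]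
        omega
    · rw [Fin.sum_univ_succ]
      simp only [Fin.cons_zero, Fin.cons_succ]
      omega
  · intro r _; exact Fin.cons_self_tail r
  · intro p _
    simp only [Fin.cons_zero, Fin.tail_cons]
  · intro r _; rw [Fin.cons_self_tail]


section multivariate
variable {τ₁ τ₂ : ℝ} (hτ₂ : 0 < τ₂) (hττ : τ₂ < τ₁)
include hτ₂ hττ

lemma main_cauchy (k : ℕ) : ∀ (n : ℕ) (x : Fin (k + 1) → ℝ),
    dbinom τ₁ τ₂ (∑ i, x i) n =
      ∑ r ∈ (Fintype.piFinset fun _ : Fin k => Finset.range (n + 1)).filter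
          (fun r => ∑ j, r j ≤ n),
        τ₁ ^ (∑ j : Fin k, ((n : ℝ) - ((∑ i ∈ Finset.Iic j, r i : ℕ) : ℝ)) *
            (x j.castSucc - (r j : ℝ))) *
          τ₂ ^ (∑ j : Fin k, (r j : ℝ) *
              ((∑ i ∈ Finset.univ.filter fun i : Fin (k + 1) => (j : ℕ) < (i : ℕ), x i) -
                ((n : ℝ) - ((∑ i ∈ Finset.Iic j, r i : ℕ) : ℝ)))) *
          ∏ j : Fin (k + 1), dbinom τ₁ τ₂ (x j)
            ((Fin.snoc r (n - ∑ i, r i) : Fin (k + 1) → ℕ) j) := by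
  induction k with
  | zero =>
    intro n x
    have hset : ((Fintype.piFinset fun _ : Fin 0 => Finset.range (n + 1)).filter
        (fun r => ∑ j, r j ≤ n)) = {fun i => i.elim0} := by
      apply Finset.eq_singleton_iff_unique_mem.mpr
      constructor
      · simp only [Finset.mem_filter, Fintype.mem_piFinset]
        exact ⟨fun a => a.elim0, by simp⟩
      · intro r _
        funext i
        exact i.elim0
    rw [hset, Finset.sum_singleton]
    simp [Fin.snoc, Fin.sum_univ_one]
  | succ k ih =>
    intro n x
    have h₁ : (0:ℝ) < τ₁ := hτ₂.trans hττ
    rw [sum_filter_piFinset_succ k n, Fin.sum_univ_succ x,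
      cauchy2 hτ₂ hττ n (x 0) (∑ i : Fin (k+1), x i.succ)]
    apply Finset.sum_congr rfl
    intro a ha
    rw [Finset.mem_range, Nat.lt_succ_iff] at ha
    rw [ih (n - a) (fun i => x i.succ), Finset.mul_sum, Finset.mul_sum]
    apply Finset.sum_congr rfl
    intro s hs
    simp only [Finset.mem_filter, Fintype.mem_piFinset, Finset.mem_range] at hs
    obtain ⟨hs1, hs2⟩ := hs
    have hc : n - ∑ i, (Fin.cons a s : Fin (k+1) → ℕ) i = (n - a) - ∑ j, s j := by
      rw [Fin.sum_univ_succ]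
      simp only [Fin.cons_zero, Fin.cons_succ]
      omega
    have hA : (∑ j : Fin (k+1), ((n:ℝ) -
          ((∑ i ∈ Finset.Iic j, (Fin.cons a s : Fin (k+1) → ℕ) i : ℕ) : ℝ)) *
            (x j.castSucc - ((Fin.cons a s : Fin (k+1) → ℕ) j : ℝ)))
        = ((n:ℝ) - (a:ℝ)) * (x 0 - (a:ℝ)) +
          ∑ j : Fin k, (((n - a : ℕ):ℝ) - ((∑ i ∈ Finset.Iic j, s i : ℕ) : ℝ)) *
            (x j.castSucc.succ - (s j : ℝ)) := by
      rw [Fin.sum_univ_succ]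
      congr 1
      · refine Finset.sum_congr rfl fun j _ => ?_
        rw [sum_Iic_cons, Fin.cons_succ, ← Fin.succ_castSucc, Nat.cast_sub ha]
        push_cast
        ring
    have hB : (∑ j : Fin (k+1), ((Fin.cons a s : Fin (k+1) → ℕ) j : ℝ) *
          ((∑ i ∈ Finset.univ.filter fun i : Fin (k + 2) => (j : ℕ) < (i : ℕ), x i) -
            ((n:ℝ) - ((∑ i ∈ Finset.Iic j, (Fin.cons a s : Fin (k+1) → ℕ) i : ℕ) : ℝ))))
        = (a:ℝ) * ((∑ i : Fin (k+1), x i.succ) - ((n:ℝ) - (a:ℝ))) +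
          ∑ j : Fin k, (s j : ℝ) *
            ((∑ i ∈ Finset.univ.filter fun i : Fin (k + 1) => (j : ℕ) < (i : ℕ), x i.succ) -
              (((n - a : ℕ):ℝ) - ((∑ i ∈ Finset.Iic j, s i : ℕ) : ℝ))) := by
      rw [Fin.sum_univ_succ]
      congr 1
      · rw [sum_Iic_zero]
        rw [zsum_zero]
        simp [Fin.cons_zero]
      · refine Finset.sum_congr rfl fun j _ => ?_
        rw [sum_Iic_cons, Fin.cons_succ, zsum_succ, Nat.cast_sub ha]
        push_cast
        ring
    rw [hA, hB, hc, ← Fin.cons_snoc_eq_snoc_cons,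
      Fin.prod_univ_succ (f := fun j : Fin (k+1+1) => dbinom τ₁ τ₂ (x j)
        ((Fin.cons a (Fin.snoc s (n - a - ∑ i, s i)) : Fin (k+1+1) → ℕ) j))]
    simp only [Fin.cons_zero, Fin.cons_succ, Wt]
    rw [Real.rpow_add h₁, Real.rpow_add hτ₂]
    ring

end multivariate


/-- Multivariate deformed Cauchy formula, second form:
`C(x₁+⋯+x_{k+1}, n) = Σ τ₁^{Σ_j (n−s_j)(x_j−r_j)} τ₂^{Σ_j r_j(z_j−(n−s_j))}
  Π_j C(x_j, r_j)`, summed over tuples `(r₁,…,r_k)` with `r₁+⋯+r_k ≤ n`,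
where `s_j = r₁+⋯+r_j`, `r_{k+1} = n − s_k` and `z_j = x_{j+1}+⋯+x_{k+1}`. -/
theorem deformed_multivariate_cauchy_second
    (τ₁ τ₂ : ℝ) (hτ₂ : 0 < τ₂) (hττ : τ₂ < τ₁)
    (n k : ℕ) (hk : 1 ≤ k) (x : Fin (k + 1) → ℝ) :
    dbinom τ₁ τ₂ (∑ i, x i) n =
      ∑ r ∈ (Fintype.piFinset fun _ : Fin k => Finset.range (n + 1)).filter
          (fun r => ∑ j, r j ≤ n),
        τ₁ ^ (∑ j : Fin k, ((n : ℝ) - ((∑ i ∈ Finset.Iic j, r i : ℕ) : ℝ)) *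
            (x j.castSucc - (r j : ℝ))) *
          τ₂ ^ (∑ j : Fin k, (r j : ℝ) *
              ((∑ i ∈ Finset.univ.filter fun i : Fin (k + 1) => (j : ℕ) < (i : ℕ), x i) -
                ((n : ℝ) - ((∑ i ∈ Finset.Iic j, r i : ℕ) : ℝ)))) *
          ∏ j : Fin (k + 1), dbinom τ₁ τ₂ (x j) ((Fin.snoc r (n - ∑ i, r i) : Fin (k + 1) → ℕ) j) :=
  main_cauchy hτ₂ hττ k n x
end
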